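/- The Jacobson radical of B(Z_2) equals the two-sided ideal generated by the arrows ρ_1,…,ρ_7, and the semisimple quotient B(Z_2)/rad(B(Z_2)) is isomorphic to F_2 × F_2 × F_2 × F_2. -/

import Mathlib

open FreeAlgebra

/-- Generators of the path algebra `B(Z_2)`: four vertex idempotents and seven arrows. -/
inductive Gen2 : Type
  | e : Fin 4 → Gen2
  | r : Fin 7 → Gen2

/-- Sources of the arrows ρ₁,…,ρ₇. -/
def src2 : Fin 7 → Fin 4 := ![0, 1, 0, 1, 2, 3, 2]

/-- Targets of the arrows ρ₁,…,ρ₇. -/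
def tgt2 : Fin 7 → Fin 4 := ![1, 0, 1, 2, 3, 2, 3]

/-- Relations presenting `B(Z_2)` as a quotient of the free algebra: the path-algebra
relations for the quiver together with ρ₁ρ₄ = ρ₄ρ₇ = ρ₂ρ₁ = ρ₃ρ₂ = ρ₆ρ₅ = ρ₇ρ₆ = 0. -/
inductive Rel2 : FreeAlgebra (ZMod 2) Gen2 → FreeAlgebra (ZMod 2) Gen2 → Prop
  | idem (k : Fin 4) :
      Rel2 (ι (ZMod 2) (Gen2.e k) * ι (ZMod 2) (Gen2.e k)) (ι (ZMod 2) (Gen2.e k))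
  | orth (k l : Fin 4) (h : k ≠ l) : Rel2 (ι (ZMod 2) (Gen2.e k) * ι (ZMod 2) (Gen2.e l)) 0
  | sum : Rel2 (∑ k : Fin 4, ι (ZMod 2) (Gen2.e k)) 1
  | source (m : Fin 7) :
      Rel2 (ι (ZMod 2) (Gen2.e (src2 m)) * ι (ZMod 2) (Gen2.r m)) (ι (ZMod 2) (Gen2.r m))
  | target (m : Fin 7) :
      Rel2 (ι (ZMod 2) (Gen2.r m) * ι (ZMod 2) (Gen2.e (tgt2 m))) (ι (ZMod 2) (Gen2.r m))
  | rel14 : Rel2 (ι (ZMod 2) (Gen2.r 0) * ι (ZMod 2) (Gen2.r 3)) 0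
  | rel47 : Rel2 (ι (ZMod 2) (Gen2.r 3) * ι (ZMod 2) (Gen2.r 6)) 0
  | rel21 : Rel2 (ι (ZMod 2) (Gen2.r 1) * ι (ZMod 2) (Gen2.r 0)) 0
  | rel32 : Rel2 (ι (ZMod 2) (Gen2.r 2) * ι (ZMod 2) (Gen2.r 1)) 0
  | rel65 : Rel2 (ι (ZMod 2) (Gen2.r 5) * ι (ZMod 2) (Gen2.r 4)) 0
  | rel76 : Rel2 (ι (ZMod 2) (Gen2.r 6) * ι (ZMod 2) (Gen2.r 5)) 0

/-- The genus-2 bordered algebra `B(Z_2)`. -/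
abbrev B2 : Type := RingQuot Rel2

/-- The idempotents i₀, i₁, i₂, i₃ in `B(Z_2)`. -/
noncomputable def idem2 (k : Fin 4) : B2 :=
  RingQuot.mkAlgHom (ZMod 2) Rel2 (ι (ZMod 2) (Gen2.e k))

/-- The arrows ρ₁,…,ρ₇ in `B(Z_2)` (indexed by `Fin 7`). -/
noncomputable def arr2 (m : Fin 7) : B2 :=
  RingQuot.mkAlgHom (ZMod 2) Rel2 (ι (ZMod 2) (Gen2.r m))

/-- The arrow ρ_k in `B(Z_2)`, using 1-based indexing; `0` for out-of-range indices. -/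
noncomputable def ρ2 (k : ℕ) : B2 :=
  if h : 1 ≤ k ∧ k ≤ 7 then arr2 ⟨k - 1, by omega⟩ else 0

/-- The chord ρ_{[i,j]} = ρ_i ρ_{i+1} ⋯ ρ_j in `B(Z_2)` (1-based indices). -/
noncomputable def chord2 (i j : ℕ) : B2 :=
  ((List.range' i (j + 1 - i)).map ρ2).prod


/-- A two-sided ideal is nilpotent if for some n ≥ 1 every product of n of its
elements vanishes. -/
def IsNilpotentTwoSidedIdeal (I : TwoSidedIdeal B2) : Prop :=
  ∃ n : ℕ, 0 < n ∧ ∀ f : Fin n → B2, (∀ t, f t ∈ I) → (List.ofFn f).prod = 0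

section Aux

open RingQuot

noncomputable abbrev mkB : FreeAlgebra (ZMod 2) Gen2 →ₐ[ZMod 2] B2 :=
  RingQuot.mkAlgHom (ZMod 2) Rel2

lemma rel_eq {a b : FreeAlgebra (ZMod 2) Gen2} (h : Rel2 a b) : mkB a = mkB b :=
  RingQuot.mkAlgHom_rel _ h

lemma E_mul_self (k : Fin 4) : idem2 k * idem2 k = idem2 k := by
  unfold idem2
  rw [← map_mul]; exact rel_eq (Rel2.idem k)

lemma E_mul_ne (k l : Fin 4) (h : k ≠ l) : idem2 k * idem2 l = 0 := by
  unfold idem2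
  rw [← map_mul, show (0 : B2) = mkB 0 from (map_zero mkB).symm]
  exact rel_eq (Rel2.orth k l h)

lemma E_sum : ∑ k : Fin 4, idem2 k = 1 := by
  have : ∑ k : Fin 4, idem2 k = mkB (∑ k : Fin 4, FreeAlgebra.ι (ZMod 2) (Gen2.e k)) := by
    rw [map_sum]; rfl
  rw [this, rel_eq Rel2.sum, map_one]

lemma src_mul (m : Fin 7) : idem2 (src2 m) * arr2 m = arr2 m := by
  unfold idem2 arr2
  rw [← map_mul]; exact rel_eq (Rel2.source m)

lemma mul_tgt (m : Fin 7) : arr2 m * idem2 (tgt2 m) = arr2 m := by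
  unfold idem2 arr2
  rw [← map_mul]; exact rel_eq (Rel2.target m)

lemma arr_mul_arr_nc (a b : Fin 7) (h : tgt2 a ≠ src2 b) : arr2 a * arr2 b = 0 := by
  calc arr2 a * arr2 b = (arr2 a * idem2 (tgt2 a)) * (idem2 (src2 b) * arr2 b) := by
        rw [mul_tgt, src_mul]
    _ = arr2 a * ((idem2 (tgt2 a) * idem2 (src2 b)) * arr2 b) := by simp only [mul_assoc]
    _ = 0 := by rw [E_mul_ne _ _ h, zero_mul, mul_zero]

lemma arr_rel (a b : Fin 7)
    (h : Rel2 (FreeAlgebra.ι (ZMod 2) (Gen2.r a) * FreeAlgebra.ι (ZMod 2) (Gen2.r b)) 0) :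
    arr2 a * arr2 b = 0 := by
  unfold arr2
  rw [← map_mul, show (0 : B2) = mkB 0 from (map_zero mkB).symm]
  exact rel_eq h

lemma arr_mul_arr (a b : Fin 7) (h : (b : ℕ) ≠ (a : ℕ) + 1) : arr2 a * arr2 b = 0 := by
  fin_cases a <;> fin_cases b <;>
    first
      | exact absurd (by decide) h
      | exact arr_rel _ _ Rel2.rel14
      | exact arr_rel _ _ Rel2.rel47
      | exact arr_rel _ _ Rel2.rel21
      | exact arr_rel _ _ Rel2.rel32
      | exact arr_rel _ _ Rel2.rel65
      | exact arr_rel _ _ Rel2.rel76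
      | exact arr_mul_arr_nc _ _ (by decide)

lemma ρ2_eq (k : ℕ) (h1 : 1 ≤ k) (h7 : k ≤ 7) : ρ2 k = arr2 ⟨k - 1, by omega⟩ :=
  dif_pos ⟨h1, h7⟩

lemma ρ_mul_ρ (a b : ℕ) (ha : 1 ≤ a) (ha7 : a ≤ 7) (hb : 1 ≤ b) (hb7 : b ≤ 7)
    (h : b ≠ a + 1) : ρ2 a * ρ2 b = 0 := by
  rw [ρ2_eq a ha ha7, ρ2_eq b hb hb7]
  exact arr_mul_arr _ _ (by simp only [Fin.val_mk]; omega)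

lemma chord2_self (i : ℕ) : chord2 i i = ρ2 i := by
  simp [chord2]

lemma chord2_cons (i j : ℕ) (h : i ≤ j) : chord2 i j = ρ2 i * chord2 (i + 1) j := by
  rw [chord2, chord2, show j + 1 - i = (j - i) + 1 from by omega, List.range'_succ,
    show j + 1 - (i + 1) = j - i from by omega]
  simp

lemma chord2_append (i j j' : ℕ) (h1 : i ≤ j + 1) (h2 : j ≤ j') :
    chord2 i j * chord2 (j + 1) j' = chord2 i j' := by
  rw [chord2, chord2, chord2, ← List.prod_append, ← List.map_append]
  have hr := @List.range'_append_1 i (j + 1 - i) (j' - j)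
  rw [show i + (j + 1 - i) = j + 1 from by omega] at hr
  rw [show j' + 1 - (j + 1) = j' - j from by omega, hr,
    show j + 1 - i + (j' - j) = j' + 1 - i from by omega]

lemma chord2_concat (i j : ℕ) (h1 : 1 ≤ i) (h : i ≤ j) :
    chord2 i j = chord2 i (j - 1) * ρ2 j := by
  have h2 := chord2_append i (j - 1) j (by omega) (by omega)
  rw [show j - 1 + 1 = j from by omega, chord2_self] at h2
  exact h2.symm

def isChord (i j : ℕ) : Prop := 1 ≤ i ∧ i ≤ j ∧ j ≤ 7

lemma chord_mul_chord_zero {i j i' j' : ℕ} (h : isChord i j) (h' : isChord i' j')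
    (hne : i' ≠ j + 1) : chord2 i j * chord2 i' j' = 0 := by
  obtain ⟨h1, h2, h3⟩ := h; obtain ⟨h1', h2', h3'⟩ := h'
  rw [chord2_concat i j h1 h2, chord2_cons i' j' h2']
  have hz : ρ2 j * ρ2 i' = 0 := ρ_mul_ρ j i' (by omega) h3 h1' (by omega) hne
  calc chord2 i (j - 1) * ρ2 j * (ρ2 i' * chord2 (i' + 1) j')
      = chord2 i (j - 1) * (ρ2 j * ρ2 i') * chord2 (i' + 1) j' := by
        simp only [mul_assoc]
    _ = 0 := by rw [hz, mul_zero, zero_mul]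

lemma E_mul_ρ (k : Fin 4) (i : ℕ) (h1 : 1 ≤ i) (h7 : i ≤ 7) :
    idem2 k * ρ2 i = ρ2 i ∨ idem2 k * ρ2 i = 0 := by
  rw [ρ2_eq i h1 h7]
  by_cases hk : k = src2 ⟨i - 1, by omega⟩
  · left; rw [hk, src_mul]
  · right; rw [← src_mul ⟨i - 1, by omega⟩, ← mul_assoc, E_mul_ne _ _ hk, zero_mul]

lemma ρ_mul_E (k : Fin 4) (i : ℕ) (h1 : 1 ≤ i) (h7 : i ≤ 7) :
    ρ2 i * idem2 k = ρ2 i ∨ ρ2 i * idem2 k = 0 := by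
  rw [ρ2_eq i h1 h7]
  by_cases hk : tgt2 ⟨i - 1, by omega⟩ = k
  · left; rw [← hk, mul_tgt]
  · right; rw [← mul_tgt ⟨i - 1, by omega⟩, mul_assoc, E_mul_ne _ _ hk, mul_zero]

lemma E_mul_chord (k : Fin 4) {i j : ℕ} (h : isChord i j) :
    idem2 k * chord2 i j = chord2 i j ∨ idem2 k * chord2 i j = 0 := by
  obtain ⟨h1, h2, h3⟩ := h
  rw [chord2_cons i j h2, ← mul_assoc]
  rcases E_mul_ρ k i h1 (le_trans h2 h3) with he | he <;> rw [he]
  · left; rfl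
  · right; rw [zero_mul]

lemma chord_mul_E (k : Fin 4) {i j : ℕ} (h : isChord i j) :
    chord2 i j * idem2 k = chord2 i j ∨ chord2 i j * idem2 k = 0 := by
  obtain ⟨h1, h2, h3⟩ := h
  rw [chord2_concat i j h1 h2, mul_assoc]
  rcases ρ_mul_E k j (by omega) h3 with he | he <;> rw [he]
  · left; rfl
  · right; rw [mul_zero]

lemma arr2_eq_chord (m : Fin 7) : arr2 m = chord2 ((m : ℕ) + 1) ((m : ℕ) + 1) := by
  rw [chord2_self, ρ2_eq _ (by omega) (by omega)]
  congr 1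

def chordSet : Set B2 := {x | ∃ i j, isChord i j ∧ x = chord2 i j}

noncomputable def NN (k : ℕ) : Submodule (ZMod 2) B2 :=
  Submodule.span (ZMod 2) {x | ∃ i j, isChord i j ∧ k ≤ j + 1 - i ∧ x = chord2 i j}

lemma NN_mono {a b : ℕ} (h : a ≤ b) : NN b ≤ NN a :=
  Submodule.span_mono (fun x hx => by
    obtain ⟨i, j, hc, hl, hx⟩ := hx
    exact ⟨i, j, hc, le_trans h hl, hx⟩)

lemma chordSet_subset_NN_one : chordSet ⊆ NN 1 := fun x hx => by
  obtain ⟨i, j, hc, hx⟩ := hx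
  exact Submodule.subset_span ⟨i, j, hc, by obtain ⟨a, b, c⟩ := hc; omega, hx⟩

lemma NN_mul {a b : ℕ} {x y : B2} (hx : x ∈ NN a) (hy : y ∈ NN b) : x * y ∈ NN (a + b) := by
  induction hx using Submodule.span_induction with
  | mem x hxs =>
    induction hy using Submodule.span_induction with
    | mem y hys =>
      obtain ⟨i, j, ⟨hc1, hc2, hc3⟩, hl, rfl⟩ := hxs
      obtain ⟨i', j', ⟨hc1', hc2', hc3'⟩, hl', rfl⟩ := hys
      by_cases hij : i' = j + 1
      · subst hij
        rw [chord2_append i j j' (by omega) (by omega)]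
        exact Submodule.subset_span ⟨i, j', ⟨hc1, by omega, hc3'⟩, by omega, rfl⟩
      · rw [chord_mul_chord_zero ⟨hc1, hc2, hc3⟩ ⟨hc1', hc2', hc3'⟩ hij]
        exact zero_mem _
    | zero => rw [mul_zero]; exact zero_mem _
    | add u v hu hv ihu ihv => rw [mul_add]; exact add_mem ihu ihv
    | smul r u hu ihu => rw [mul_smul_comm]; exact Submodule.smul_mem _ _ ihu
  | zero => rw [zero_mul]; exact zero_mem _
  | add u v hu hv ihu ihv => rw [add_mul]; exact add_mem ihu ihv
  | smul r u hu ihu => rw [smul_mul_assoc]; exact Submodule.smul_mem _ _ ihu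

noncomputable def VV : Submodule (ZMod 2) B2 :=
  Submodule.span (ZMod 2) (Set.range idem2 ∪ chordSet)

lemma VV_mul {x y : B2} (hx : x ∈ VV) (hy : y ∈ VV) : x * y ∈ VV := by
  induction hx using Submodule.span_induction with
  | mem x hxs =>
    induction hy using Submodule.span_induction with
    | mem y hys =>
      rcases hxs with ⟨k, rfl⟩ | ⟨i, j, hc, rfl⟩ <;>
        rcases hys with ⟨l, rfl⟩ | ⟨i', j', hc', rfl⟩
      · by_cases hkl : k = l
        · subst hkl; rw [E_mul_self]
          exact Submodule.subset_span (Or.inl ⟨k, rfl⟩)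
        · rw [E_mul_ne _ _ hkl]; exact zero_mem _
      · rcases E_mul_chord k hc' with h | h <;> rw [h]
        · exact Submodule.subset_span (Or.inr ⟨i', j', hc', rfl⟩)
        · exact zero_mem _
      · rcases chord_mul_E l hc with h | h <;> rw [h]
        · exact Submodule.subset_span (Or.inr ⟨i, j, hc, rfl⟩)
        · exact zero_mem _
      · by_cases hij : i' = j + 1
        · subst hij
          obtain ⟨hc1, hc2, hc3⟩ := hc; obtain ⟨hc1', hc2', hc3'⟩ := hc'
          rw [chord2_append i j j' (by omega) (by omega)]
          exact Submodule.subset_span (Or.inr ⟨i, j', ⟨hc1, by omega, hc3'⟩, rfl⟩)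
        · rw [chord_mul_chord_zero hc hc' hij]; exact zero_mem _
    | zero => rw [mul_zero]; exact zero_mem _
    | add u v hu hv ihu ihv => rw [mul_add]; exact add_mem ihu ihv
    | smul r u hu ihu => rw [mul_smul_comm]; exact Submodule.smul_mem _ _ ihu
  | zero => rw [zero_mul]; exact zero_mem _
  | add u v hu hv ihu ihv => rw [add_mul]; exact add_mem ihu ihv
  | smul r u hu ihu => rw [smul_mul_assoc]; exact Submodule.smul_mem _ _ ihu

lemma one_mem_VV : (1 : B2) ∈ VV := by
  rw [← E_sum]
  exact Submodule.sum_mem _ fun k _ => Submodule.subset_span (Or.inl ⟨k, rfl⟩)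

lemma VV_top (x : B2) : x ∈ VV := by
  obtain ⟨y, rfl⟩ := RingQuot.mkAlgHom_surjective (ZMod 2) Rel2 x
  induction y using FreeAlgebra.induction with
  | grade0 r =>
    rw [AlgHom.commutes]
    simpa [Algebra.algebraMap_eq_smul_one] using Submodule.smul_mem _ r one_mem_VV
  | grade1 g =>
    cases g with
    | e k => exact Submodule.subset_span (Or.inl ⟨k, rfl⟩)
    | r m =>
      rw [show RingQuot.mkAlgHom (ZMod 2) Rel2 (FreeAlgebra.ι (ZMod 2) (Gen2.r m)) = arr2 m
        from rfl, arr2_eq_chord]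
      refine Submodule.subset_span (Or.inr ⟨_, _, ⟨?_, le_refl _, ?_⟩, rfl⟩)
      · omega
      · have := m.isLt; omega
  | mul a b ha hb => rw [map_mul]; exact VV_mul ha hb
  | add a b ha hb => rw [map_add]; exact add_mem ha hb

noncomputable abbrev J2 : TwoSidedIdeal B2 := TwoSidedIdeal.span (Set.range arr2)

lemma mul_left_NN1 (x : B2) {y : B2} (hy : y ∈ NN 1) : x * y ∈ NN 1 := by
  have hx := VV_top x
  induction hx using Submodule.span_induction with
  | mem u hu =>
    rcases hu with ⟨k, rfl⟩ | ⟨i, j, hc, rfl⟩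
    · induction hy using Submodule.span_induction with
      | mem v hv =>
        obtain ⟨i, j, hc, hl, rfl⟩ := hv
        rcases E_mul_chord k hc with h | h <;> rw [h]
        · exact Submodule.subset_span ⟨i, j, hc, hl, rfl⟩
        · exact zero_mem _
      | zero => rw [mul_zero]; exact zero_mem _
      | add u v hu hv ihu ihv => rw [mul_add]; exact add_mem ihu ihv
      | smul r u hu ihu => rw [mul_smul_comm]; exact Submodule.smul_mem _ _ ihu
    · have h1 : chord2 i j ∈ NN 1 := chordSet_subset_NN_one ⟨i, j, hc, rfl⟩
      exact NN_mono (by omega) (NN_mul h1 hy)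
  | zero => rw [zero_mul]; exact zero_mem _
  | add u v hu hv ihu ihv => rw [add_mul]; exact add_mem ihu ihv
  | smul r u hu ihu => rw [smul_mul_assoc]; exact Submodule.smul_mem _ _ ihu

lemma mul_right_NN1 (y : B2) {x : B2} (hx : x ∈ NN 1) : x * y ∈ NN 1 := by
  have hy := VV_top y
  induction hy using Submodule.span_induction with
  | mem u hu =>
    rcases hu with ⟨k, rfl⟩ | ⟨i, j, hc, rfl⟩
    · induction hx using Submodule.span_induction with
      | mem v hv =>
        obtain ⟨i, j, hc, hl, rfl⟩ := hv
        rcases chord_mul_E k hc with h | h <;> rw [h]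
        · exact Submodule.subset_span ⟨i, j, hc, hl, rfl⟩
        · exact zero_mem _
      | zero => rw [zero_mul]; exact zero_mem _
      | add u v hu hv ihu ihv => rw [add_mul]; exact add_mem ihu ihv
      | smul r u hu ihu => rw [smul_mul_assoc]; exact Submodule.smul_mem _ _ ihu
    · have h1 : chord2 i j ∈ NN 1 := chordSet_subset_NN_one ⟨i, j, hc, rfl⟩
      exact NN_mono (by omega) (NN_mul hx h1)
  | zero => rw [mul_zero]; exact zero_mem _
  | add u v hu hv ihu ihv => rw [mul_add]; exact add_mem ihu ihv
  | smul r u hu ihu => rw [mul_smul_comm]; exact Submodule.smul_mem _ _ ihu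

noncomputable def Mideal : TwoSidedIdeal B2 :=
  TwoSidedIdeal.mk' (NN 1 : Set B2) (zero_mem _) (fun hx hy => add_mem hx hy)
    (fun hx => neg_mem hx) (fun hy => mul_left_NN1 _ hy) (fun hx => mul_right_NN1 _ hx)

lemma arr2_mem_chordSet (m : Fin 7) : arr2 m ∈ chordSet := by
  rw [arr2_eq_chord]
  exact ⟨_, _, ⟨by omega, le_refl _, by have := m.isLt; omega⟩, rfl⟩

lemma J_subset_NN1 {x : B2} (hx : x ∈ J2) : x ∈ NN 1 := by
  have h := TwoSidedIdeal.mem_span_iff.mp hx Mideal ?_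
  · rwa [Mideal, TwoSidedIdeal.mem_mk'] at h
  · rintro y ⟨m, rfl⟩
    rw [Mideal, SetLike.mem_coe, TwoSidedIdeal.mem_mk']
    exact chordSet_subset_NN_one (arr2_mem_chordSet m)

lemma NN8_eq_zero {x : B2} (hx : x ∈ NN 8) : x = 0 := by
  have hset : {x : B2 | ∃ i j, isChord i j ∧ 8 ≤ j + 1 - i ∧ x = chord2 i j} = ∅ := by
    ext z
    simp only [Set.mem_setOf_eq, Set.mem_empty_iff_false, iff_false]
    rintro ⟨i, j, ⟨h1, h2, h3⟩, hl, -⟩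
    omega
  rw [NN, hset, Submodule.span_empty, Submodule.mem_bot] at hx
  exact hx

lemma prod_mem_NN (n : ℕ) (hn : 1 ≤ n) (f : Fin n → B2) (hf : ∀ t, f t ∈ NN 1) :
    (List.ofFn f).prod ∈ NN n := by
  induction n with
  | zero => omega
  | succ n ih =>
    by_cases h0 : n = 0
    · subst h0
      simpa [List.ofFn_succ] using hf 0
    · rw [List.ofFn_succ, List.prod_cons]
      have h2 := NN_mul (hf 0) (ih (by omega) (fun i => f i.succ) (fun t => hf _))
      rwa [show 1 + n = n + 1 from by omega] at h2

lemma part1 : IsNilpotentTwoSidedIdeal J2 :=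
  ⟨8, by omega, fun f hf =>
    NN8_eq_zero (prod_mem_NN 8 (by omega) f (fun t => J_subset_NN1 (hf t)))⟩

abbrev F4 : Type := ZMod 2 × ZMod 2 × ZMod 2 × ZMod 2

def gdiag : Fin 4 → F4 := ![(1, 0, 0, 0), (0, 1, 0, 0), (0, 0, 1, 0), (0, 0, 0, 1)]

def gmap : Gen2 → F4
  | .e k => gdiag k
  | .r _ => 0

noncomputable def φ0 : FreeAlgebra (ZMod 2) Gen2 →ₐ[ZMod 2] F4 :=
  FreeAlgebra.lift (ZMod 2) gmap

lemma φ0_ι (g : Gen2) : φ0 (FreeAlgebra.ι (ZMod 2) g) = gmap g :=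
  FreeAlgebra.lift_ι_apply _ _

lemma φ0_rel {x y : FreeAlgebra (ZMod 2) Gen2} (h : Rel2 x y) : φ0 x = φ0 y := by
  cases h with
  | idem k =>
    simp only [map_mul, φ0_ι, gmap]
    fin_cases k <;> decide
  | orth k l hne =>
    simp only [map_mul, φ0_ι, gmap, map_zero]
    fin_cases k <;> fin_cases l <;> first | exact absurd rfl hne | decide
  | sum =>
    simp only [map_sum, φ0_ι, gmap, map_one]
    rw [Fin.sum_univ_four]
    decide
  | source m => simp only [map_mul, φ0_ι, gmap, mul_zero]
  | target m => simp only [map_mul, φ0_ι, gmap, zero_mul]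
  | rel14 => simp only [map_mul, φ0_ι, gmap, mul_zero, map_zero]
  | rel47 => simp only [map_mul, φ0_ι, gmap, mul_zero, map_zero]
  | rel21 => simp only [map_mul, φ0_ι, gmap, mul_zero, map_zero]
  | rel32 => simp only [map_mul, φ0_ι, gmap, mul_zero, map_zero]
  | rel65 => simp only [map_mul, φ0_ι, gmap, mul_zero, map_zero]
  | rel76 => simp only [map_mul, φ0_ι, gmap, mul_zero, map_zero]

noncomputable def φ : B2 →ₐ[ZMod 2] F4 :=
  RingQuot.liftAlgHom (ZMod 2) ⟨φ0, fun _ _ h => φ0_rel h⟩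

lemma φ_mk (x : FreeAlgebra (ZMod 2) Gen2) :
    φ (RingQuot.mkAlgHom (ZMod 2) Rel2 x) = φ0 x :=
  RingQuot.liftAlgHom_mkAlgHom_apply _ _ _ _

lemma φ_idem (k : Fin 4) : φ (idem2 k) = gdiag k := by
  rw [idem2, φ_mk, φ0_ι]; rfl

lemma φ_arr (m : Fin 7) : φ (arr2 m) = 0 := by
  rw [arr2, φ_mk, φ0_ι]; rfl

lemma J_le_ker {x : B2} (hx : x ∈ J2) : φ x = 0 := by
  have h := TwoSidedIdeal.mem_span_iff.mp hx (TwoSidedIdeal.ker φ.toRingHom) ?_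
  · exact (TwoSidedIdeal.mem_ker _).mp h
  · rintro y ⟨m, rfl⟩
    rw [SetLike.mem_coe, TwoSidedIdeal.mem_ker]
    exact φ_arr m

lemma chord_mem_J {i j : ℕ} (h : isChord i j) : chord2 i j ∈ J2 := by
  obtain ⟨h1, h2, h3⟩ := h
  rw [chord2_cons i j h2, ρ2_eq i h1 (le_trans h2 h3)]
  exact J2.mul_mem_right _ _ (TwoSidedIdeal.subset_span ⟨_, rfl⟩)

lemma spanChord_le_J {m : B2} (hm : m ∈ Submodule.span (ZMod 2) chordSet) : m ∈ J2 := by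
  induction hm using Submodule.span_induction with
  | mem x hx => obtain ⟨i, j, hc, rfl⟩ := hx; exact chord_mem_J hc
  | zero => exact TwoSidedIdeal.zero_mem _
  | add u v hu hv ihu ihv => exact TwoSidedIdeal.add_mem _ ihu ihv
  | smul r u hu ihu => rw [Algebra.smul_def]; exact J2.mul_mem_left _ _ ihu

lemma φ_combo (c : Fin 4 → ZMod 2) :
    φ (∑ i, c i • idem2 i) = (c 0, c 1, c 2, c 3) := by
  rw [map_sum]
  simp only [map_smul, φ_idem]
  rw [Fin.sum_univ_four]
  simp [gdiag, Prod.ext_iff]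

lemma ker_le_J {x : B2} (hφ : φ x = 0) : x ∈ J2 := by
  have hx := VV_top x
  rw [VV, Submodule.span_union] at hx
  obtain ⟨s, hs, m, hm, rfl⟩ := Submodule.mem_sup.mp hx
  have hmJ : m ∈ J2 := spanChord_le_J hm
  obtain ⟨c, hc⟩ := (Submodule.mem_span_range_iff_exists_fun (ZMod 2)).mp hs
  have hφs : φ s = 0 := by
    have : φ s + φ m = 0 := by rw [← map_add]; exact hφ
    rwa [J_le_ker hmJ, add_zero] at this
  have hc0 : (c 0, c 1, c 2, c 3) = ((0 : ZMod 2), (0 : ZMod 2), (0 : ZMod 2), (0 : ZMod 2)) := by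
    rw [← φ_combo c, hc]; exact hφs
  have hs0 : s = 0 := by
    rw [← hc]
    obtain ⟨e0, e1, e2, e3⟩ : c 0 = 0 ∧ c 1 = 0 ∧ c 2 = 0 ∧ c 3 = 0 := by
      simpa [Prod.ext_iff] using hc0
    rw [Fin.sum_univ_four, e0, e1, e2, e3]
    simp
  rw [hs0, zero_add]
  exact hmJ

noncomputable def qhom : J2.ringCon.Quotient →+* F4 where
  toFun := Quotient.lift (fun x : B2 => φ x) (fun a b hab => by
    have h1 : a - b ∈ J2 := (TwoSidedIdeal.rel_iff _ _ _).mp hab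
    have h2 : φ a - φ b = 0 := by rw [← map_sub]; exact J_le_ker h1
    exact sub_eq_zero.mp h2)
  map_one' := map_one φ
  map_mul' := fun x y => Quotient.inductionOn₂ x y fun a b => map_mul φ a b
  map_zero' := map_zero φ
  map_add' := fun x y => Quotient.inductionOn₂ x y fun a b => map_add φ a b

lemma qhom_mk (x : B2) : qhom (x : J2.ringCon.Quotient) = φ x := rfl

lemma qhom_bij : Function.Bijective qhom := by
  constructor
  · intro a b
    refine Quotient.inductionOn₂ a b fun x y h => ?_
    have h' : φ x = φ y := h
    have hxy : x - y ∈ J2 := ker_le_J (by rw [map_sub, h', sub_self])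
    exact Quotient.sound ((TwoSidedIdeal.rel_iff _ _ _).mpr hxy)
  · intro v
    refine ⟨((![v.1, v.2.1, v.2.2.1, v.2.2.2] : Fin 4 → ZMod 2) 0 • idem2 0 +
      ![v.1, v.2.1, v.2.2.1, v.2.2.2] 1 • idem2 1 +
      ![v.1, v.2.1, v.2.2.1, v.2.2.2] 2 • idem2 2 +
      ![v.1, v.2.1, v.2.2.1, v.2.2.2] 3 • idem2 3 : B2), ?_⟩
    rw [qhom_mk]
    have := φ_combo ![v.1, v.2.1, v.2.2.1, v.2.2.2]
    rw [Fin.sum_univ_four] at this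
    rw [this]
    simp

lemma part2 (I : TwoSidedIdeal B2) (hI : IsNilpotentTwoSidedIdeal I) :
    ∀ x ∈ I, x ∈ J2 := by
  obtain ⟨n, hn, hprod⟩ := hI
  intro x hx
  have hxn : x ^ n = 0 := by
    have h := hprod (fun _ => x) (fun _ => hx)
    rwa [List.ofFn_const, List.prod_replicate] at h
  apply ker_le_J
  have hnil : IsNilpotent (φ x) := ⟨n, by rw [← map_pow, hxn, map_zero]⟩
  exact IsReduced.eq_zero _ hnil

end Aux

/-- the Jacobson radical of B(Z_2) — its largest nilpotent two-sided
ideal — equals the two-sided ideal generated by the arrows, and the semisimple quotient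
is isomorphic to F_2 × F_2 × F_2 × F_2. -/
theorem stmt_17 :
    IsNilpotentTwoSidedIdeal (TwoSidedIdeal.span (Set.range arr2)) ∧
    (∀ I : TwoSidedIdeal B2, IsNilpotentTwoSidedIdeal I →
      ∀ x ∈ I, x ∈ TwoSidedIdeal.span (Set.range arr2)) ∧
    Nonempty ((TwoSidedIdeal.span (Set.range arr2)).ringCon.Quotient ≃+*
      (ZMod 2 × ZMod 2 × ZMod 2 × ZMod 2)) :=
  ⟨part1, part2, ⟨RingEquiv.ofBijective qhom qhom_bij⟩⟩
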